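/- Let U_i : H → H be ρ_i-strongly quasi-nonexpansive with ρ_i > 0, i = 1,…,m, having a common fixed point, and let U := ∑_{i=1}^m ω_i U_i with ω_i > 0, ∑ ω_i = 1. Then Fix U = ⋂_{i=1}^m Fix U_i. -/
import Mathlib


open scoped RealInnerProductSpace

/-- `U` is `ρ`-strongly quasi-nonexpansive. -/
def IsSQNE {H : Type*} [NormedAddCommGroup H] [InnerProductSpace ℝ H]
    (U : H → H) (ρ : ℝ) : Prop :=
  ∀ x : H, ∀ z ∈ Function.fixedPoints U, ‖U x - z‖ ^ 2 ≤ ‖x - z‖ ^ 2 - ρ * ‖U x - x‖ ^ 2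

theorem stmt7 {H : Type*} [NormedAddCommGroup H] [InnerProductSpace ℝ H]
    {m : ℕ} (U : Fin m → H → H) (ρ : Fin m → ℝ)
    (hρ : ∀ i, 0 < ρ i) (hU : ∀ i, IsSQNE (U i) (ρ i))
    (hfix : (⋂ i, Function.fixedPoints (U i)).Nonempty)
    (ω : Fin m → ℝ) (hω : ∀ i, 0 < ω i) (hsum : ∑ i, ω i = 1) :
    Function.fixedPoints (fun x => ∑ i, ω i • U i x) =
      ⋂ i, Function.fixedPoints (U i) := by
  ext x
  simp only [Set.mem_iInter, Function.mem_fixedPoints, Function.IsFixedPt]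
  constructor
  · intro hx
    obtain ⟨z, hz⟩ := hfix
    have hzmem : ∀ i, z ∈ Function.fixedPoints (U i) := fun i => Set.mem_iInter.mp hz i
    have hzsum : ∑ i, ω i • z = z := by
      rw [← Finset.sum_smul, hsum, one_smul]
    have hxz : ∑ i, ω i • (U i x - z) = x - z := by
      simp only [smul_sub]
      rw [Finset.sum_sub_distrib, hx, hzsum]
    -- step 1 : norm ≤ weighted sum of norms
    have h1 : ‖x - z‖ ≤ ∑ i, ω i * ‖U i x - z‖ := by
      calc ‖x - z‖ = ‖∑ i, ω i • (U i x - z)‖ := by rw [hxz]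
        _ ≤ ∑ i, ‖ω i • (U i x - z)‖ := norm_sum_le _ _
        _ = ∑ i, ω i * ‖U i x - z‖ := by
            refine Finset.sum_congr rfl fun i _ => ?_
            rw [norm_smul, Real.norm_eq_abs, abs_of_pos (hω i)]
    -- step 2 : Cauchy-Schwarz
    have h2 : ‖x - z‖ ^ 2 ≤ ∑ i, ω i * ‖U i x - z‖ ^ 2 := by
      have hcs := Finset.sum_mul_sq_le_sq_mul_sq Finset.univ
        (fun i => Real.sqrt (ω i)) (fun i => Real.sqrt (ω i) * ‖U i x - z‖)
      have e1 : ∑ i, Real.sqrt (ω i) * (Real.sqrt (ω i) * ‖U i x - z‖)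
          = ∑ i, ω i * ‖U i x - z‖ := by
        refine Finset.sum_congr rfl fun i _ => ?_
        rw [← mul_assoc, Real.mul_self_sqrt (hω i).le]
      have e2 : ∑ i, Real.sqrt (ω i) ^ 2 = 1 := by
        rw [← hsum]
        exact Finset.sum_congr rfl fun i _ => Real.sq_sqrt (hω i).le
      have e3 : ∑ i, (Real.sqrt (ω i) * ‖U i x - z‖) ^ 2
          = ∑ i, ω i * ‖U i x - z‖ ^ 2 := by
        refine Finset.sum_congr rfl fun i _ => ?_
        rw [mul_pow, Real.sq_sqrt (hω i).le]
      rw [e1, e2, e3, one_mul] at hcs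
      calc ‖x - z‖ ^ 2 ≤ (∑ i, ω i * ‖U i x - z‖) ^ 2 := by
            have hnn : 0 ≤ ∑ i, ω i * ‖U i x - z‖ :=
              Finset.sum_nonneg fun i _ => mul_nonneg (hω i).le (norm_nonneg _)
            exact pow_le_pow_left₀ (norm_nonneg _) h1 2
        _ ≤ ∑ i, ω i * ‖U i x - z‖ ^ 2 := hcs
    -- step 3 : SQNE bound
    have h3 : ∑ i, ω i * ‖U i x - z‖ ^ 2
        ≤ ‖x - z‖ ^ 2 - ∑ i, ω i * (ρ i * ‖U i x - x‖ ^ 2) := by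
      have : ∑ i, ω i * ‖U i x - z‖ ^ 2
          ≤ ∑ i, ω i * (‖x - z‖ ^ 2 - ρ i * ‖U i x - x‖ ^ 2) :=
        Finset.sum_le_sum fun i _ =>
          mul_le_mul_of_nonneg_left (hU i x z (hzmem i)) (hω i).le
      calc ∑ i, ω i * ‖U i x - z‖ ^ 2
          ≤ ∑ i, ω i * (‖x - z‖ ^ 2 - ρ i * ‖U i x - x‖ ^ 2) := this
        _ = ‖x - z‖ ^ 2 - ∑ i, ω i * (ρ i * ‖U i x - x‖ ^ 2) := by
            simp only [mul_sub]
            rw [Finset.sum_sub_distrib, ← Finset.sum_mul, hsum, one_mul]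
    have hkey : ∑ i, ω i * (ρ i * ‖U i x - x‖ ^ 2) ≤ 0 := by linarith
    have hzero : ∀ i ∈ Finset.univ, ω i * (ρ i * ‖U i x - x‖ ^ 2) = 0 := by
      rw [← Finset.sum_eq_zero_iff_of_nonneg]
      · exact le_antisymm hkey (Finset.sum_nonneg fun i _ =>
          mul_nonneg (hω i).le (mul_nonneg (hρ i).le (sq_nonneg _)))
      · exact fun i _ => mul_nonneg (hω i).le (mul_nonneg (hρ i).le (sq_nonneg _))
    intro i
    have := hzero i (Finset.mem_univ i)
    have hne : ‖U i x - x‖ ^ 2 = 0 := by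
      rcases mul_eq_zero.mp this with h | h
      · exact absurd h (hω i).ne'
      · rcases mul_eq_zero.mp h with h' | h'
        · exact absurd h' (hρ i).ne'
        · exact h'
    have : U i x - x = 0 := by
      rwa [pow_eq_zero_iff (by norm_num), norm_eq_zero] at hne
    exact sub_eq_zero.mp this
  · intro hx
    calc ∑ i, ω i • U i x = ∑ i, ω i • x := by
          refine Finset.sum_congr rfl fun i _ => by rw [hx i]
      _ = x := by rw [← Finset.sum_smul, hsum, one_smul]
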